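/- If Σ + Σ_z is invertible, the matrix W = (Σ + Σ_z)^{-1} Σ minimizes the function E(W) = Tr((W^T - I) Σ (W^T - I)^T) + Tr(W^T Σ_z W) over all d×d real matrices W. -/

import Mathlib

open Matrix

/-- The trace of a real positive semidefinite matrix is nonnegative. -/
lemma psd_trace_nonneg {d : ℕ} {M : Matrix (Fin d) (Fin d) ℝ}
    (hM : M.PosSemidef) : 0 ≤ Matrix.trace M := by
  rw [Matrix.trace]
  apply Finset.sum_nonneg
  intro i _
  have := hM.diag_nonneg (i := i)
  simpa [dotProduct, Matrix.mulVec, Pi.single_apply, Finset.sum_ite_eq,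
    Matrix.diag] using this

/-- If `S + Sz` is invertible, the Wiener filter `W = (S + Sz)⁻¹ S` minimizes
`E(W) = Tr((Wᵀ - I) S (Wᵀ - I)ᵀ) + Tr(Wᵀ Sz W)` over all `d×d` real matrices. -/
theorem wiener_filter_minimizes
    (d : ℕ) (S Sz : Matrix (Fin d) (Fin d) ℝ)
    (hS : S.PosSemidef) (hSz : Sz.PosSemidef)
    (hinv : IsUnit (S + Sz)) :
    ∀ W : Matrix (Fin d) (Fin d) ℝ,
      Matrix.trace (((((S + Sz)⁻¹ * S)ᵀ) - 1) * S * ((((S + Sz)⁻¹ * S)ᵀ) - 1)ᵀ)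
        + Matrix.trace ((((S + Sz)⁻¹ * S)ᵀ) * Sz * ((S + Sz)⁻¹ * S))
      ≤ Matrix.trace ((Wᵀ - 1) * S * (Wᵀ - 1)ᵀ) + Matrix.trace (Wᵀ * Sz * W) := by
  intro W
  set A : Matrix (Fin d) (Fin d) ℝ := S + Sz with hA
  set W₀ : Matrix (Fin d) (Fin d) ℝ := A⁻¹ * S with hW₀
  have hApsd : A.PosSemidef := hS.add hSz
  have hdet : IsUnit A.det := (Matrix.isUnit_iff_isUnit_det A).mp hinv
  have h1 : A * A⁻¹ = 1 := Matrix.mul_nonsing_inv A hdet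
  have h2 : A⁻¹ * A = 1 := Matrix.nonsing_inv_mul A hdet
  have hST : Sᵀ = S := hS.isHermitian.eq
  have hAT : Aᵀ = A := hApsd.isHermitian.eq
  have hiT : (A⁻¹)ᵀ = A⁻¹ := by
    rw [Matrix.transpose_nonsing_inv, hAT]
  have hAW : A * W₀ = S := by rw [hW₀, ← mul_assoc, h1, one_mul]
  have hWA : W₀ᵀ * A = S := by
    rw [hW₀, Matrix.transpose_mul, hiT, hST, mul_assoc, h2, mul_one]
  -- nonnegativity of the completed square
  have hpsd : ((W - W₀)ᵀ * A * (W - W₀)).PosSemidef := by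
    have := hApsd.conjTranspose_mul_mul_same (W - W₀)
    simpa using this
  have hge : 0 ≤ Matrix.trace ((W - W₀)ᵀ * A * (W - W₀)) := psd_trace_nonneg hpsd
  -- helper trace identities
  have t1 : Matrix.trace (Wᵀ * A * W₀) = Matrix.trace (Wᵀ * S) := by
    rw [mul_assoc, hAW]
  have t2 : Matrix.trace (W₀ᵀ * A * W) = Matrix.trace (S * W) := by
    rw [hWA]
  have t3 : Matrix.trace (W₀ᵀ * A * W₀) = Matrix.trace (S * W₀) := by
    rw [hWA]
  have t4 : Matrix.trace (Wᵀ * S) = Matrix.trace (S * W) := by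
    rw [← Matrix.trace_transpose (Wᵀ * S), Matrix.transpose_mul, hST,
      Matrix.transpose_transpose]
  have t5 : Matrix.trace (W₀ᵀ * S) = Matrix.trace (S * W₀) := by
    rw [← Matrix.trace_transpose (W₀ᵀ * S), Matrix.transpose_mul, hST,
      Matrix.transpose_transpose]
  -- key algebraic identity
  have key : Matrix.trace ((Wᵀ - 1) * S * (Wᵀ - 1)ᵀ) + Matrix.trace (Wᵀ * Sz * W)
      - (Matrix.trace ((W₀ᵀ - 1) * S * (W₀ᵀ - 1)ᵀ) + Matrix.trace (W₀ᵀ * Sz * W₀))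
      = Matrix.trace ((W - W₀)ᵀ * A * (W - W₀)) := by
    have expand : ∀ X : Matrix (Fin d) (Fin d) ℝ,
        Matrix.trace ((Xᵀ - 1) * S * (Xᵀ - 1)ᵀ) + Matrix.trace (Xᵀ * Sz * X)
        = Matrix.trace (Xᵀ * A * X) - Matrix.trace (Xᵀ * S) - Matrix.trace (S * X)
          + Matrix.trace S := by
      intro X
      simp only [Matrix.transpose_sub, Matrix.transpose_one, Matrix.transpose_transpose,
        Matrix.sub_mul, Matrix.mul_sub, Matrix.one_mul, Matrix.mul_one, hA,
        Matrix.add_mul, Matrix.mul_add, Matrix.trace_sub, Matrix.trace_add]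
      ring
    have expand2 : Matrix.trace ((W - W₀)ᵀ * A * (W - W₀))
        = Matrix.trace (Wᵀ * A * W) - Matrix.trace (Wᵀ * A * W₀)
          - Matrix.trace (W₀ᵀ * A * W) + Matrix.trace (W₀ᵀ * A * W₀) := by
      simp only [Matrix.transpose_sub, Matrix.sub_mul, Matrix.mul_sub,
        Matrix.trace_sub]
      ring
    rw [expand W, expand W₀, expand2, t1, t2, t3, t5]
    ring
  have hgoal : Matrix.trace ((W₀ᵀ - 1) * S * (W₀ᵀ - 1)ᵀ) + Matrix.trace (W₀ᵀ * Sz * W₀)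
      ≤ Matrix.trace ((Wᵀ - 1) * S * (Wᵀ - 1)ᵀ) + Matrix.trace (Wᵀ * Sz * W) := by
    linarith [key, hge]
  simpa [hW₀, hA] using hgoal
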